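/- Let ω be an infinite word over a finite integer alphabet with bounded additive complexity and slope(ω) = p/q ∈ ℚ (p, q relatively prime, q ≥ 1). Let I be a set of pairwise separated intervals [i,j] ⊆ ℕ such that for every [i,j] ∈ I the factor (ω(i), …, ω(j)) has slope p/q. Let g : ℕ → ℕ be the strictly increasing enumeration of the complement ℕ ∖ ⋃I (this complement is infinite since the intervals are separated). Then the contracted word ω ∖ I := ω ∘ g has bounded additive complexity and slope(ω ∖ I) = p/q. -/

import Mathlib

/-- `B` is a factor of the infinite word `ω`. -/
def Factor (ω : ℕ → ℤ) (B : List ℤ) : Prop :=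
  ∃ m : ℕ, B = (List.range B.length).map (fun i => ω (m + i))

/-- `ω` has bounded additive complexity: there is `M` such that for every `n ≥ 1`
the set of sums of factors of length `n` has at most `M` elements. -/
def BoundedAddComplexity (ω : ℕ → ℤ) : Prop :=
  ∃ M : ℕ, ∀ n : ℕ, 1 ≤ n →
    ∃ T : Finset ℤ, T.card ≤ M ∧
      ∀ B : List ℤ, Factor ω B → B.length = n → B.sum ∈ T

/-- The slope of a finite word. -/
def wordSlope (B : List ℤ) : ℚ := (B.sum : ℚ) / (B.length : ℚ)

/-- `ω` has slope `L`. -/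
def HasSlope (ω : ℕ → ℤ) (L : ℝ) : Prop :=
  Filter.Tendsto (fun n : ℕ => (∑ i ∈ Finset.range n, (ω i : ℝ)) / n)
    Filter.atTop (nhds L)

/-- The block of ω on positions `a, a+1, …, b-1`. -/
def seg (ω : ℕ → ℤ) (a b : ℕ) : List ℤ := (List.range (b - a)).map (fun j => ω (a + j))

lemma lsum (f : ℕ → ℤ) (n : ℕ) :
    ((List.range n).map f).sum = ∑ i ∈ Finset.range n, f i := by
  induction n with
  | zero => simp
  | succ k ih => rw [List.range_succ, List.map_append, List.sum_append,
      Finset.sum_range_succ, ih]; simp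

lemma cross (h : ℕ → ℤ) (d c : ℤ) (hd : ∀ t, |h (t + 1) - h t| ≤ d)
    (m0 m1 : ℕ) (h0 : h m0 ≤ c) (h1 : c < h m1) :
    ∃ t, c < h t ∧ h t ≤ c + d := by
  rcases le_total m0 m1 with hle | hle
  · obtain ⟨k, rfl⟩ := Nat.exists_eq_add_of_le hle
    clear hle
    induction k with
    | zero => simp at h1; omega
    | succ j ih =>
      rcases le_or_gt (h (m0 + j)) c with hj | hj
      · refine ⟨m0 + j + 1, by rw [← Nat.add_assoc] at h1; exact h1, ?_⟩
        have := hd (m0 + j)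
        rw [← Nat.add_assoc] at h1
        rw [abs_le] at this
        omega
      · exact ih hj
  · obtain ⟨k, rfl⟩ := Nat.exists_eq_add_of_le hle
    clear hle
    induction k with
    | zero => simp at h0; omega
    | succ j ih =>
      rcases le_or_gt (h (m1 + j)) c with hj | hj
      · exact ih hj
      · refine ⟨m1 + j, hj, ?_⟩
        have := hd (m1 + j)
        rw [← Nat.add_assoc] at h0
        rw [abs_le] at this
        omega

lemma sumbound (ω : ℕ → ℤ) (hfin : (Set.range ω).Finite)
    (hb : BoundedAddComplexity ω) (p q : ℤ) (hq : 1 ≤ q)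
    (hs : HasSlope ω ((p : ℝ) / (q : ℝ))) :
    ∃ C : ℤ, 0 ≤ C ∧ ∀ m n : ℕ,
      |q * (∑ i ∈ Finset.range n, ω (m + i)) - (n : ℤ) * p| ≤ q * C := by
  classical
  obtain ⟨M, hM⟩ := hb
  obtain ⟨s, hs0, hsb⟩ : ∃ s : ℤ, 0 ≤ s ∧ ∀ i, |ω i| ≤ s := by
    have hfin2 : ((fun x : ℤ => |x|) '' Set.range ω).Finite := hfin.image _
    obtain ⟨s, hsup⟩ := hfin2.bddAbove
    exact ⟨max s 0, le_max_right _ _,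
      fun i => le_trans (hsup ⟨ω i, ⟨i, rfl⟩, rfl⟩) (le_max_left _ _)⟩
  refine ⟨(2 * s + 1) * M, by positivity, ?_⟩
  intro m n
  rcases Nat.eq_zero_or_pos n with rfl | hn
  · simp; positivity
  -- the sliding sum
  set Sf : ℕ → ℤ := fun t => ∑ i ∈ Finset.range n, ω (t + i) with hSf
  have hstep : ∀ t, |Sf (t + 1) - Sf t| ≤ 2 * s := by
    intro t
    have key : Sf (t + 1) + ω t = Sf t + ω (t + n) := by
      have e1 : ∑ i ∈ Finset.range (n + 1), ω (t + i)
          = Sf (t + 1) + ω t := by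
        rw [Finset.sum_range_succ']
        simp only [hSf, add_zero]
        congr 1
        apply Finset.sum_congr rfl
        intro i _
        congr 1
        omega
      have e2 : ∑ i ∈ Finset.range (n + 1), ω (t + i) = Sf t + ω (t + n) := by
        rw [Finset.sum_range_succ]
      rw [← e1, e2]
    have h1 := hsb t
    have h2 := hsb (t + n)
    rw [abs_le] at h1 h2 ⊢
    omega
  obtain ⟨T, hTc, hTm⟩ := hM n hn
  have hmem : ∀ t, Sf t ∈ T := by
    intro t
    have := hTm ((List.range n).map (fun i => ω (t + i)))
      ⟨t, by simp⟩ (by simp)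
    rwa [lsum] at this
  set A : Finset ℤ := T.filter (fun v => ∃ t, Sf t = v) with hA
  have hSfA : ∀ t, Sf t ∈ A := fun t => Finset.mem_filter.mpr ⟨hmem t, t, rfl⟩
  have hAne : A.Nonempty := ⟨Sf 0, hSfA 0⟩
  set vmax := A.max' hAne with hvmax
  set vmin := A.min' hAne with hvmin
  have hle : ∀ t, Sf t ≤ vmax := fun t => A.le_max' _ (hSfA t)
  have hge : ∀ t, vmin ≤ Sf t := fun t => A.min'_le _ (hSfA t)
  obtain ⟨hmaxT, tmax, htmax⟩ := Finset.mem_filter.mp (A.max'_mem hAne)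
  obtain ⟨hminT, tmin, htmin⟩ := Finset.mem_filter.mp (A.min'_mem hAne)
  -- spread bound
  have hspread : vmax - vmin ≤ (2 * s + 1) * M := by
    by_contra hcon
    push_neg at hcon
    have hP : ∀ j : ℕ, j ≤ M → ∃ t,
        vmin + (j : ℤ) * (2 * s + 1) < Sf t ∧
        Sf t ≤ vmin + (j : ℤ) * (2 * s + 1) + 2 * s := by
      intro j hj
      apply cross Sf (2 * s) _ hstep tmin tmax
      · rw [htmin]; nlinarith [Int.ofNat_nonneg j]
      · rw [htmax]
        have : (j : ℤ) ≤ (M : ℤ) := by exact_mod_cast hj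
        nlinarith
    -- choose witnesses
    have hval : ∀ j ∈ Finset.range (M + 1), ∃ v ∈ A,
        vmin + (j : ℤ) * (2 * s + 1) < v ∧
        v ≤ vmin + (j : ℤ) * (2 * s + 1) + 2 * s := by
      intro j hj
      obtain ⟨t, h1, h2⟩ := hP j (by simpa [Nat.lt_succ_iff] using hj)
      exact ⟨Sf t, hSfA t, h1, h2⟩
    choose! v hvA hv1 hv2 using hval
    have hinj : Set.InjOn v (Finset.range (M + 1)) := by
      have hmono : ∀ j j', j ∈ Finset.range (M + 1) → j' ∈ Finset.range (M + 1) →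
          j < j' → v j < v j' := by
        intro j j' hjm hjm' hjj
        have b1 := hv2 j hjm
        have b2 := hv1 j' hjm'
        have : (j : ℤ) + 1 ≤ (j' : ℤ) := by exact_mod_cast hjj
        nlinarith
      intro j hjm j' hjm' heq
      rcases lt_trichotomy j j' with h | h | h
      · exact absurd heq (ne_of_lt (hmono j j' hjm hjm' h))
      · exact h
      · exact absurd heq.symm (ne_of_lt (hmono j' j hjm' hjm h))
    have hcard := Finset.card_le_card_of_injOn v
      (fun j hj => hvA j hj) hinj
    rw [Finset.card_range] at hcard
    have hAT : A.card ≤ M := le_trans (Finset.card_filter_le _ _) hTc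
    omega
  -- slope sandwich: q * vmin ≤ n * p ≤ q * vmax
  have hq0 : (0 : ℝ) < (q : ℝ) := by exact_mod_cast hq
  have hn0 : (0 : ℝ) < (n : ℝ) := by exact_mod_cast hn
  set F : ℕ → ℤ := fun t => ∑ i ∈ Finset.range t, ω i with hF
  have hFadd : ∀ k : ℕ, F (k * n + n) = F (k * n) + Sf (k * n) := by
    intro k
    rw [hF]
    simp only [Finset.sum_range_add]
    rfl
  have hFup : ∀ k : ℕ, F (k * n) ≤ (k : ℤ) * vmax := by
    intro k
    induction k with
    | zero => simp [hF]
    | succ j ih =>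
      have : (j + 1) * n = j * n + n := by ring
      rw [this, hFadd j]
      have := hle (j * n)
      push_cast
      linarith
  have hFdown : ∀ k : ℕ, (k : ℤ) * vmin ≤ F (k * n) := by
    intro k
    induction k with
    | zero => simp [hF]
    | succ j ih =>
      have : (j + 1) * n = j * n + n := by ring
      rw [this, hFadd j]
      have := hge (j * n)
      push_cast
      linarith
  have hs' : Filter.Tendsto (fun t : ℕ => (F t : ℝ) / t) Filter.atTop
      (nhds ((p : ℝ) / q)) := by
    apply hs.congr
    intro t
    rw [hF]
    push_cast
    rfl
  have hkn : Filter.Tendsto (fun k : ℕ => k * n) Filter.atTop Filter.atTop := by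
    apply Filter.tendsto_atTop_atTop_of_monotone
    · intro a b hab; exact Nat.mul_le_mul_right n hab
    · intro b; exact ⟨b, Nat.le_mul_of_pos_right b hn⟩
  have hcomp : Filter.Tendsto (fun k : ℕ => (F (k * n) : ℝ) / (k * n))
      Filter.atTop (nhds ((p : ℝ) / q)) := by
    have := hs'.comp hkn
    apply this.congr
    intro k
    simp only [Function.comp]
    push_cast
    ring_nf
  have hub : (p : ℝ) / q ≤ (vmax : ℝ) / n := by
    apply le_of_tendsto hcomp
    filter_upwards [Filter.eventually_ge_atTop 1] with k hk
    have hk0 : (0 : ℝ) < (k : ℝ) := by exact_mod_cast hk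
    have h1 : (F (k * n) : ℝ) ≤ (k : ℝ) * vmax := by exact_mod_cast hFup k
    rw [div_le_div_iff₀ (by positivity) hn0]
    calc (F (k * n) : ℝ) * n ≤ ((k : ℝ) * vmax) * n := by nlinarith
      _ = (vmax : ℝ) * (k * n) := by push_cast; ring
  have hlb : (vmin : ℝ) / n ≤ (p : ℝ) / q := by
    apply ge_of_tendsto hcomp
    filter_upwards [Filter.eventually_ge_atTop 1] with k hk
    have hk0 : (0 : ℝ) < (k : ℝ) := by exact_mod_cast hk
    have h1 : (k : ℝ) * vmin ≤ (F (k * n) : ℝ) := by exact_mod_cast hFdown k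
    rw [div_le_div_iff₀ hn0 (by positivity)]
    calc (vmin : ℝ) * (k * n) = ((k : ℝ) * vmin) * n := by ring
      _ ≤ (F (k * n) : ℝ) * n := by nlinarith
  have hub' : (n : ℤ) * p ≤ q * vmax := by
    have : (p : ℝ) * n ≤ (vmax : ℝ) * q := by
      rw [div_le_div_iff₀ hq0 hn0] at hub; linarith
    have : ((n : ℤ) * p : ℝ) ≤ ((q * vmax : ℤ) : ℝ) := by push_cast; linarith
    exact_mod_cast this
  have hlb' : q * vmin ≤ (n : ℤ) * p := by
    have : (vmin : ℝ) * q ≤ (p : ℝ) * n := by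
      rw [div_le_div_iff₀ hn0 hq0] at hlb; linarith
    have : ((q * vmin : ℤ) : ℝ) ≤ ((n : ℤ) * p : ℝ) := by push_cast; linarith
    exact_mod_cast this
  -- conclude
  have h1 : q * Sf m ≤ q * vmax := by
    have := hle m; nlinarith
  have h2 : q * vmin ≤ q * Sf m := by
    have := hge m; nlinarith
  rw [abs_le]
  constructor
  · nlinarith
  · nlinarith

lemma icc_sum (f : ℕ → ℤ) (a b : ℕ) (h : a ≤ b) :
    ∑ i ∈ Finset.range (b + 1 - a), f (a + i) = ∑ x ∈ Finset.Icc a b, f x := by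
  have himg : Finset.Icc a b = (Finset.range (b + 1 - a)).image (fun i => a + i) := by
    ext x
    simp only [Finset.mem_Icc, Finset.mem_image, Finset.mem_range]
    constructor
    · rintro ⟨h1, h2⟩; exact ⟨x - a, by omega, by omega⟩
    · rintro ⟨i, hi, rfl⟩; omega
  rw [himg, Finset.sum_image (by intro x _ y _ h; dsimp only at h; omega)]

lemma interval_sum (ω : ℕ → ℤ) (p q : ℤ) (hq : 1 ≤ q) (i j : ℕ) (hij : i ≤ j)
    (hsl : wordSlope (seg ω i (j + 1)) = (p : ℚ) / (q : ℚ)) :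
    q * (∑ x ∈ Finset.Icc i j, ω x) = p * ((j + 1 - i : ℕ) : ℤ) := by
  have hlen : (seg ω i (j + 1)).length = j + 1 - i := by simp [seg]
  have hsum : (seg ω i (j + 1)).sum = ∑ x ∈ Finset.Icc i j, ω x := by
    rw [seg, lsum, icc_sum ω i j hij]
  rw [wordSlope, hlen, hsum] at hsl
  have hl0 : ((j + 1 - i : ℕ) : ℚ) ≠ 0 :=
    Nat.cast_ne_zero.mpr (by omega)
  have hq0 : ((q : ℚ)) ≠ 0 := by
    have : (0 : ℤ) < q := hq
    exact_mod_cast this.ne'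
  rw [div_eq_div_iff hl0 hq0] at hsl
  have : ((q * (∑ x ∈ Finset.Icc i j, ω x) : ℤ) : ℚ)
      = ((p * ((j + 1 - i : ℕ) : ℤ) : ℤ) : ℚ) := by push_cast; push_cast at hsl; linarith
  exact_mod_cast this

lemma contract_identity (ω : ℕ → ℤ) (p q : ℤ) (hq : 1 ≤ q)
    (I : Set (ℕ × ℕ))
    (hIval : ∀ r ∈ I, r.1 ≤ r.2 ∧ wordSlope (seg ω r.1 (r.2 + 1)) = (p : ℚ) / (q : ℚ))
    (hsep : ∀ r ∈ I, ∀ r' ∈ I, r ≠ r' → r.1 ≤ r'.1 → r.2 + 1 < r'.1)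
    (g : ℕ → ℕ) (hg : StrictMono g)
    (hrange : Set.range g = {m : ℕ | ∀ r ∈ I, ¬(r.1 ≤ m ∧ m ≤ r.2)})
    (m k : ℕ) :
    q * (∑ i ∈ Finset.range (k + 1), ω (g (m + i))) - ((k : ℤ) + 1) * p
      = q * (∑ i ∈ Finset.range (g (m + k) + 1 - g m), ω (g m + i))
        - ((g (m + k) + 1 - g m : ℕ) : ℤ) * p := by
  classical
  set a := g m with ha
  set b := g (m + k) with hb
  have hab : a ≤ b := hg.monotone (by omega)
  have hkept : ∀ x, x ∈ Set.range g ↔ ∀ r ∈ I, ¬(r.1 ≤ x ∧ x ≤ r.2) := by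
    intro x
    rw [← Set.mem_setOf_eq (p := fun m => ∀ r ∈ I, ¬(r.1 ≤ m ∧ m ≤ r.2)), ← hrange]
  set W := Finset.Icc a b with hW
  set Kp := W.filter (fun x => x ∈ Set.range g) with hKp
  set Rp := W.filter (fun x => x ∉ Set.range g) with hRp
  -- window sum in range form
  have hwin : ∑ i ∈ Finset.range (b + 1 - a), ω (a + i) = ∑ x ∈ W, ω x :=
    icc_sum ω a b hab
  -- split
  have hsplit : ∑ x ∈ W, ω x = ∑ x ∈ Kp, ω x + ∑ x ∈ Rp, ω x :=
    (Finset.sum_filter_add_sum_filter_not W _ _).symm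
  have hcardsplit : W.card = Kp.card + Rp.card :=
    (Finset.card_filter_add_card_filter_not (fun x => x ∈ Set.range g)).symm
  -- kept part
  have hKimg : Kp = (Finset.Icc m (m + k)).image g := by
    ext x
    simp only [hKp, Finset.mem_filter, hW, Finset.mem_Icc, Finset.mem_image, Set.mem_range]
    constructor
    · rintro ⟨⟨hax, hxb⟩, t, rfl⟩
      refine ⟨t, ⟨?_, ?_⟩, rfl⟩
      · exact (hg.le_iff_le).mp hax
      · exact (hg.le_iff_le).mp hxb
    · rintro ⟨t, ⟨h1, h2⟩, rfl⟩
      exact ⟨⟨hg.monotone h1, hg.monotone h2⟩, t, rfl⟩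
  have hKsum : ∑ x ∈ Kp, ω x = ∑ i ∈ Finset.range (k + 1), ω (g (m + i)) := by
    rw [hKimg, Finset.sum_image (fun x _ y _ h => hg.injective h)]
    have : m + k + 1 - m = k + 1 := by omega
    rw [← icc_sum (fun t => ω (g t)) m (m + k) (by omega), this]
  have hKcard : Kp.card = k + 1 := by
    rw [hKimg, Finset.card_image_of_injective _ hg.injective, Nat.card_Icc]
    omega
  -- removed part
  set J := {r : ℕ × ℕ | r ∈ I ∧ a < r.1 ∧ r.2 < b} with hJ
  have hJfin : J.Finite := by
    apply Set.Finite.subset ((Set.finite_Icc a b).prod (Set.finite_Icc a b))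
    rintro ⟨i, j⟩ ⟨hrI, h1, h2⟩
    have hij := (hIval _ hrI).1
    constructor
    · exact ⟨le_of_lt h1, le_trans hij (le_of_lt h2)⟩
    · exact ⟨le_trans (le_of_lt h1) hij, le_of_lt h2⟩
  set Jf := hJfin.toFinset with hJf
  have hJfmem : ∀ r, r ∈ Jf ↔ r ∈ I ∧ a < r.1 ∧ r.2 < b := by
    intro r; rw [hJf, Set.Finite.mem_toFinset]; rfl
  have hRbi : Rp = Jf.biUnion (fun r => Finset.Icc r.1 r.2) := by
    ext x
    simp only [hRp, Finset.mem_filter, hW, Finset.mem_Icc, Finset.mem_biUnion]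
    constructor
    · rintro ⟨⟨hax, hxb⟩, hnr⟩
      rw [hkept] at hnr
      push_neg at hnr
      obtain ⟨r, hrI, hr1, hr2⟩ := hnr
      have hra : a < r.1 := by
        by_contra hcon
        push_neg at hcon
        have : a ∈ Set.range g := ⟨m, rfl⟩
        rw [hkept] at this
        exact this r hrI ⟨hcon, le_trans hax hr2⟩
      have hrb : r.2 < b := by
        by_contra hcon
        push_neg at hcon
        have : b ∈ Set.range g := ⟨m + k, rfl⟩
        rw [hkept] at this
        exact this r hrI ⟨le_trans hr1 hxb, hcon⟩
      exact ⟨r, (hJfmem r).mpr ⟨hrI, hra, hrb⟩, ⟨hr1, hr2⟩⟩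
    · rintro ⟨r, hrJ, hx⟩
      obtain ⟨hrI, hra, hrb⟩ := (hJfmem r).mp hrJ
      refine ⟨⟨le_trans (le_of_lt hra) hx.1, le_trans hx.2 (le_of_lt hrb)⟩, ?_⟩
      intro hcon
      rw [hkept] at hcon
      exact hcon r hrI ⟨hx.1, hx.2⟩
  have hdisj : ∀ r ∈ Jf, ∀ r' ∈ Jf, r ≠ r' →
      Disjoint (Finset.Icc r.1 r.2) (Finset.Icc r'.1 r'.2) := by
    intro r hr r' hr' hne
    obtain ⟨hrI, _, _⟩ := (hJfmem r).mp hr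
    obtain ⟨hrI', _, _⟩ := (hJfmem r').mp hr'
    rw [Finset.disjoint_left]
    rcases le_total r.1 r'.1 with hc | hc
    · have := hsep r hrI r' hrI' hne hc
      intro x hx hx'
      rw [Finset.mem_Icc] at hx hx'
      omega
    · have := hsep r' hrI' r hrI (Ne.symm hne) hc
      intro x hx hx'
      rw [Finset.mem_Icc] at hx hx'
      omega
  have hRsum : q * (∑ x ∈ Rp, ω x) = p * (Rp.card : ℤ) := by
    have hdisj' : Set.PairwiseDisjoint (↑Jf) (fun r : ℕ × ℕ => Finset.Icc r.1 r.2) :=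
      fun r hr r' hr' hne => hdisj r (Finset.mem_coe.mp hr) r' (Finset.mem_coe.mp hr') hne
    rw [hRbi, Finset.sum_biUnion hdisj', Finset.card_biUnion hdisj]
    rw [Finset.mul_sum]
    push_cast
    rw [Finset.mul_sum]
    apply Finset.sum_congr rfl
    intro r hr
    obtain ⟨hrI, _, _⟩ := (hJfmem r).mp hr
    have hij := (hIval r hrI).1
    have := interval_sum ω p q hq r.1 r.2 hij (hIval r hrI).2
    rw [this, Nat.card_Icc]
  -- assemble
  have hWcard : (W.card : ℤ) = (b : ℤ) + 1 - a := by
    rw [hW, Nat.card_Icc]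
    push_cast [Nat.cast_sub (by omega : a ≤ b + 1)]
    ring
  have hLcast : ((b + 1 - a : ℕ) : ℤ) = (b : ℤ) + 1 - a := by
    push_cast [Nat.cast_sub (by omega : a ≤ b + 1)]
    ring
  have hRcard : (Rp.card : ℤ) = ((b : ℤ) + 1 - a) - ((k : ℤ) + 1) := by
    have : (W.card : ℤ) = (Kp.card : ℤ) + (Rp.card : ℤ) := by exact_mod_cast hcardsplit
    rw [hWcard, hKcard] at this
    push_cast at this
    omega
  rw [hwin, hsplit, hLcast]
  rw [mul_add, hKsum, hRsum, hRcard]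
  ring

/-- Contracting a separated family of intervals of slope p/q from a
bounded-additive-complexity word of slope p/q yields a word with bounded additive
complexity and slope p/q. -/
theorem stmt10 (ω : ℕ → ℤ) (hfin : (Set.range ω).Finite)
    (hb : BoundedAddComplexity ω) (p q : ℤ) (hq : 1 ≤ q) (hpq : IsCoprime p q)
    (hs : HasSlope ω ((p : ℝ) / (q : ℝ)))
    (I : Set (ℕ × ℕ))
    (hIval : ∀ r ∈ I, r.1 ≤ r.2 ∧ wordSlope (seg ω r.1 (r.2 + 1)) = (p : ℚ) / (q : ℚ))
    (hsep : ∀ r ∈ I, ∀ r' ∈ I, r ≠ r' → r.1 ≤ r'.1 → r.2 + 1 < r'.1)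
    (g : ℕ → ℕ) (hg : StrictMono g)
    (hrange : Set.range g = {m : ℕ | ∀ r ∈ I, ¬(r.1 ≤ m ∧ m ≤ r.2)}) :
    BoundedAddComplexity (ω ∘ g) ∧ HasSlope (ω ∘ g) ((p : ℝ) / (q : ℝ)) := by
  classical
  obtain ⟨C, hC0, hCb⟩ := sumbound ω hfin hb p q hq hs
  have key : ∀ m k : ℕ,
      |q * (∑ i ∈ Finset.range (k + 1), ω (g (m + i))) - ((k : ℤ) + 1) * p| ≤ q * C := by
    intro m k
    rw [contract_identity ω p q hq I hIval hsep g hg hrange m k]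
    exact hCb (g m) (g (m + k) + 1 - g m)
  constructor
  · -- bounded additive complexity
    refine ⟨(2 * q * C + 1).toNat, ?_⟩
    intro n hn
    refine ⟨(Finset.Icc ((n : ℤ) * p - q * C) ((n : ℤ) * p + q * C)).image
      (fun y => y / q), ?_, ?_⟩
    · apply le_trans Finset.card_image_le
      rw [Int.card_Icc]
      apply le_of_eq
      congr 1
      ring
    · intro B hB hlen
      obtain ⟨k, hk⟩ : ∃ k, n = k + 1 := ⟨n - 1, by omega⟩
      subst hk
      obtain ⟨m, hm⟩ := hB
      have hsum : B.sum = ∑ i ∈ Finset.range (k + 1), ω (g (m + i)) := by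
        have h1 := congrArg List.sum hm
        rw [hlen] at h1
        rw [h1, lsum]
        rfl
      have hkey := key m k
      rw [← hsum, abs_le] at hkey
      refine Finset.mem_image.mpr ⟨q * B.sum, Finset.mem_Icc.mpr ⟨?_, ?_⟩, ?_⟩
      · push_cast
        push_cast at hkey
        linarith [hkey.1]
      · push_cast
        push_cast at hkey
        linarith [hkey.2]
      · exact Int.mul_ediv_cancel_left B.sum (by omega)
  · -- slope
    have hkeyP : ∀ n : ℕ, 1 ≤ n →
        |q * (∑ i ∈ Finset.range n, ω (g i)) - (n : ℤ) * p| ≤ q * C := by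
      intro n hn
      obtain ⟨k, rfl⟩ : ∃ k, n = k + 1 := ⟨n - 1, by omega⟩
      have h := key 0 k
      simp only [zero_add] at h
      have hcast : ((k : ℤ) + 1) = ((k + 1 : ℕ) : ℤ) := by push_cast; ring
      rwa [hcast] at h
    have hqR : (0 : ℝ) < (q : ℝ) := by exact_mod_cast hq
    have hbound : ∀ᶠ n : ℕ in Filter.atTop,
        ‖(∑ i ∈ Finset.range n, ((ω ∘ g) i : ℝ)) / n - (p : ℝ) / q‖ ≤ (C : ℝ) / n := by
      filter_upwards [Filter.eventually_ge_atTop 1] with n hn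
      have hnR : (0 : ℝ) < (n : ℝ) := by exact_mod_cast hn
      have h1 : |(q : ℝ) * (∑ i ∈ Finset.range n, ((ω (g i)) : ℝ)) - (n : ℝ) * p|
          ≤ (q : ℝ) * C := by
        have := hkeyP n hn
        have h2 : |((q * (∑ i ∈ Finset.range n, ω (g i)) - (n : ℤ) * p : ℤ) : ℝ)|
            ≤ ((q * C : ℤ) : ℝ) := by exact_mod_cast this
        push_cast at h2
        convert h2 using 2
      set fn : ℝ := ∑ i ∈ Finset.range n, ((ω (g i)) : ℝ) with hfn
      have heq : fn / n - (p : ℝ) / q = (q * fn - n * p) / (q * n) := by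
        field_simp
      have heq2 : (C : ℝ) / n = (q * C) / (q * n) := by
        rw [mul_div_mul_left _ _ (ne_of_gt hqR)]
      rw [Real.norm_eq_abs]
      have hcomp : (∑ i ∈ Finset.range n, ((ω ∘ g) i : ℝ)) = fn := rfl
      rw [hcomp, heq, heq2, abs_div, abs_of_pos (by positivity : (0:ℝ) < (q:ℝ) * n)]
      apply div_le_div_of_nonneg_right h1 (by positivity) |>.trans_eq rfl
    have h0 : Filter.Tendsto
        (fun n : ℕ => (∑ i ∈ Finset.range n, ((ω ∘ g) i : ℝ)) / n - (p : ℝ) / q)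
        Filter.atTop (nhds 0) :=
      squeeze_zero_norm' hbound (tendsto_const_div_atTop_nhds_zero_nat (C : ℝ))
    have h1 := h0.add (tendsto_const_nhds (x := (p : ℝ) / q) (f := Filter.atTop))
    rw [zero_add] at h1
    unfold HasSlope
    apply h1.congr
    intro n
    ring
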